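/- Let H : ℝ → ℝ be continuous and coercive and F0 : ℝ → ℝ be continuous, non-increasing and semi-coercive. Then the relaxation ℜF0 coincides with Guerand's relaxed boundary function: for every limiter point q ∈ A_{F0} = A⁺_{F0} ∪ A⁻_{F0} and every p ∈ [q⁻, q⁺] ∩ ℝ one has (ℜF0)(p) = H(q), and for every p ∈ ℝ that belongs to no interval [q⁻, q⁺] with q ∈ A_{F0} one has (ℜF0)(p) = H(p). -/

import Mathlib

open Set Filter

attribute [local instance] Classical.propDecidable

noncomputable section

/-- `H` is coercive: `H p → +∞` as `|p| → +∞`. -/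
def Coercive (H : ℝ → ℝ) : Prop := Tendsto H (cocompact ℝ) atTop

/-- `F` is semi-coercive: `F p → +∞` as `p → -∞`. -/
def SemiCoercive (F : ℝ → ℝ) : Prop := Tendsto F atBot atTop

/-- Sub-relaxation: `(R̲F)(p) = sup_{q ≥ p} min (F q) (H q)`. -/
def subR (H F : ℝ → ℝ) (p : ℝ) : ℝ := sSup ((fun q => min (F q) (H q)) '' Ici p)

/-- Super-relaxation: `(R̄F)(p) = inf_{q ≤ p} max (F q) (H q)`. -/
def supR (H F : ℝ → ℝ) (p : ℝ) : ℝ := sInf ((fun q => max (F q) (H q)) '' Iic p)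

/-- Relaxation operator: `R̲F` where `F ≥ H`, `R̄F` where `F ≤ H`. -/
def relax (H F : ℝ → ℝ) (p : ℝ) : ℝ := if H p ≤ F p then subR H F p else supR H F p

/-- `p` is a negative characteristic point of `F` relative to `H`. -/
def negChar (H F : ℝ → ℝ) (p : ℝ) : Prop :=
  H p = F p ∧ ∃ ε > 0, ∀ q ∈ Ioo (p - ε) p, H q < H p

/-- `p` is a positive characteristic point of `F` relative to `H`. -/
def posChar (H F : ℝ → ℝ) (p : ℝ) : Prop :=
  H p = F p ∧ ∃ ε > 0, ∀ q ∈ Ioo p (p + ε), H p < H q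

/-- The upper point `p⁺ ∈ ℝ ∪ {+∞}` associated with `p` and `H`. -/
def upperPt (H : ℝ → ℝ) (p : ℝ) : EReal :=
  if ∀ ε > 0, ∃ q, p < q ∧ q < p + ε ∧ H q ≤ H p then (p : EReal)
  else sSup ((fun q : ℝ => (q : EReal)) '' {q : ℝ | p < q ∧ ∀ r ∈ Ioo p q, H p < H r})

/-- The lower point `p⁻` associated with `p` and `H`. -/
def lowerPt (H : ℝ → ℝ) (p : ℝ) : ℝ :=
  if ∀ ε > 0, ∃ q, p - ε < q ∧ q < p ∧ H p ≤ H q then p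
  else sInf {q : ℝ | q < p ∧ ∀ r ∈ Ioo q p, H r < H p}

/-- `p` is a positive limiter point of `F`. -/
def posLimiter (H F : ℝ → ℝ) (p : ℝ) : Prop :=
  (p : EReal) < upperPt H p ∧ F p ≤ H p ∧
    ∀ q : ℝ, H q < H p → F q ≤ H q →
      {r : ℝ | lowerPt H q < r ∧ (r : EReal) < upperPt H q} ∩
        {r : ℝ | p < r ∧ (r : EReal) < upperPt H p} = ∅

/-- `p` is a negative limiter point of `F`. -/
def negLimiter (H F : ℝ → ℝ) (p : ℝ) : Prop :=
  lowerPt H p < p ∧ H p ≤ F p ∧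
    ∀ q : ℝ, H q ≤ F q → H p < H q →
      {r : ℝ | lowerPt H q < r ∧ (r : EReal) < upperPt H q} ∩ Ioo (lowerPt H p) p = ∅

/-- The Godunov flux associated with `H`. -/
def godunov (H : ℝ → ℝ) (q p : ℝ) : ℝ :=
  if p ≤ q then sSup (H '' Icc p q) else sInf (H '' Icc q p)

/-- The lower (set-valued) Godunov semi-flux `G̲(q,p)`, as a subset of the extended reals. -/
def subG (H : ℝ → ℝ) (q p : ℝ) : Set EReal :=
  if q < p then {⊥}
  else if q = p then Iic ((H p : ℝ) : EReal)
  else {((godunov H q p : ℝ) : EReal)}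

/-- The upper (set-valued) Godunov semi-flux `Ḡ(q,p)`, as a subset of the extended reals. -/
def supG (H : ℝ → ℝ) (q p : ℝ) : Set EReal :=
  if q < p then {((godunov H q p : ℝ) : EReal)}
  else if q = p then Ici ((H p : ℝ) : EReal)
  else {⊤}

namespace RG

variable {H F0 : ℝ → ℝ}

lemma coercive_atBot (hHc : Coercive H) (c : ℝ) : ∃ B : ℝ, ∀ y ≤ B, c ≤ H y := by
  have h : ∀ᶠ x in cocompact ℝ, c ≤ H x := hHc.eventually (eventually_ge_atTop c)
  have h2 : ∀ᶠ x in atBot, c ≤ H x := by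
    have hle : (atBot : Filter ℝ) ≤ cocompact ℝ := by
      rw [cocompact_eq_atBot_atTop]; exact le_sup_left
    exact hle h
  exact eventually_atBot.1 h2

lemma coercive_atTop (hHc : Coercive H) (c : ℝ) : ∃ B : ℝ, ∀ y, B ≤ y → c ≤ H y := by
  have h : ∀ᶠ x in cocompact ℝ, c ≤ H x := hHc.eventually (eventually_ge_atTop c)
  have h2 : ∀ᶠ x in atTop, c ≤ H x := by
    have hle : (atTop : Filter ℝ) ≤ cocompact ℝ := by
      rw [cocompact_eq_atBot_atTop]; exact le_sup_right
    exact hle h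
  exact eventually_atTop.1 h2

lemma semicoercive_atBot (hFs : SemiCoercive F0) (c : ℝ) : ∃ B : ℝ, ∀ y ≤ B, c ≤ F0 y :=
  eventually_atBot.1 (hFs.eventually (eventually_ge_atTop c))

lemma lowerPt_bddBelow (hHc : Coercive H) (q : ℝ) :
    BddBelow {x : ℝ | x < q ∧ ∀ r ∈ Ioo x q, H r < H q} := by
  obtain ⟨B, hB⟩ := coercive_atBot hHc (H q)
  refine ⟨min B (q - 1), fun s hs => ?_⟩
  by_contra hlt
  push_neg at hlt
  have hmem : min B (q-1) ∈ Ioo s q := ⟨hlt, by have := min_le_right B (q-1); linarith⟩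
  have := hs.2 _ hmem
  have := hB _ (min_le_left B (q-1))
  linarith

lemma lowerPt_le (hHc : Coercive H) (q : ℝ) : lowerPt H q ≤ q := by
  unfold lowerPt
  split_ifs with h
  · exact le_refl q
  · push_neg at h
    obtain ⟨ε, hε, h'⟩ := h
    have hmem : q - ε ∈ {x : ℝ | x < q ∧ ∀ r ∈ Ioo x q, H r < H q} :=
      ⟨by linarith, fun r hr => h' r hr.1 hr.2⟩
    have := csInf_le (lowerPt_bddBelow hHc q) hmem
    linarith

lemma lowerPt_le_of (hHc : Coercive H) {a q : ℝ} (haq : a < q)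
    (h : ∀ x ∈ Ioo a q, H x < H q) : lowerPt H q ≤ a := by
  unfold lowerPt
  split_ifs with hdeg
  · exfalso
    obtain ⟨q', h1, h2, h3⟩ := hdeg (q - a) (by linarith)
    have := h q' ⟨by linarith, h2⟩
    linarith
  · exact csInf_le (lowerPt_bddBelow hHc q) ⟨haq, h⟩

lemma H_lt_of_lower (hHc : Coercive H) {q x : ℝ} (h1 : lowerPt H q < x) (h2 : x < q) :
    H x < H q := by
  unfold lowerPt at h1
  split_ifs at h1 with hdeg
  · linarith
  · push_neg at hdeg
    obtain ⟨ε, hε, h'⟩ := hdeg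
    have hne : {x : ℝ | x < q ∧ ∀ r ∈ Ioo x q, H r < H q}.Nonempty :=
      ⟨q - ε, by linarith, fun r hr => h' r hr.1 hr.2⟩
    obtain ⟨s, hs, hsx⟩ := exists_lt_of_csInf_lt hne h1
    exact hs.2 x ⟨hsx, h2⟩

lemma H_lowerPt_eq (hH : Continuous H) (hHc : Coercive H) {q : ℝ}
    (h : lowerPt H q < q) : H (lowerPt H q) = H q := by
  set ℓ := lowerPt H q with hℓ
  have hle : H ℓ ≤ H q := by
    have hsub : Ioo ℓ q ⊆ {x : ℝ | H x ≤ H q} :=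
      fun x hx => le_of_lt (H_lt_of_lower hHc hx.1 hx.2)
    have hcl : ℓ ∈ closure (Ioo ℓ q) := by
      rw [closure_Ioo (ne_of_lt h)]; exact ⟨le_refl _, le_of_lt h⟩
    have := closure_mono hsub hcl
    rwa [IsClosed.closure_eq (isClosed_le hH continuous_const)] at this
  refine le_antisymm hle ?_
  by_contra hc
  push_neg at hc
  have hopen : IsOpen {x : ℝ | H x < H q} := isOpen_lt hH continuous_const
  obtain ⟨δ, hδ, hball⟩ := Metric.isOpen_iff.1 hopen ℓ hc
  have hall : ∀ x ∈ Ioo (ℓ - δ/2) q, H x < H q := by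
    intro x hx
    rcases le_or_gt x ℓ with hxl | hxl
    · exact hball (by rw [Real.ball_eq_Ioo]; exact ⟨by linarith [hx.1], by linarith [hδ]⟩)
    · exact H_lt_of_lower hHc hxl hx.2
  have := lowerPt_le_of hHc (by linarith) hall
  rw [← hℓ] at this
  linarith

lemma le_upperPt (q : ℝ) : (q : EReal) ≤ upperPt H q := by
  unfold upperPt
  split_ifs with h
  · exact le_refl _
  · push_neg at h
    obtain ⟨ε, hε, h'⟩ := h
    have hmem : q + ε ∈ {x : ℝ | q < x ∧ ∀ r ∈ Ioo q x, H q < H r} :=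
      ⟨by linarith, fun r hr => h' r hr.1 hr.2⟩
    refine le_trans ?_ (le_sSup ⟨q + ε, hmem, rfl⟩)
    show (q : EReal) ≤ ((q + ε : ℝ) : EReal)
    exact_mod_cast by linarith

lemma upperPt_ge_of {q b : ℝ} (hqb : q < b) (h : ∀ x ∈ Ioo q b, H q < H x) :
    (b : EReal) ≤ upperPt H q := by
  unfold upperPt
  split_ifs with hdeg
  · exfalso
    obtain ⟨q', h1, h2, h3⟩ := hdeg (b - q) (by linarith)
    have := h q' ⟨h1, by linarith⟩
    linarith
  · exact le_sSup ⟨b, ⟨hqb, h⟩, rfl⟩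

lemma H_lt_of_upper {q x : ℝ} (h1 : q < x) (h2 : (x : EReal) < upperPt H q) :
    H q < H x := by
  unfold upperPt at h2
  split_ifs at h2 with hdeg
  · have : x < q := by exact_mod_cast h2
    linarith
  · obtain ⟨e, ⟨y, hyT, rfl⟩, hxe⟩ := lt_sSup_iff.1 h2
    have hxy : x < y := by
      have : (x : EReal) < (y : EReal) := hxe
      exact_mod_cast this
    exact hyT.2 x ⟨h1, hxy⟩

lemma H_upperPt_eq (hH : Continuous H) {q b : ℝ} (hqb : q < b)
    (hub : upperPt H q = (b : EReal)) : H b = H q := by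
  have h1 : ∀ x ∈ Ioo q b, H q < H x := fun x hx =>
    H_lt_of_upper hx.1 (by rw [hub]; exact_mod_cast hx.2)
  have hge : H q ≤ H b := by
    have hsub : Ioo q b ⊆ {x : ℝ | H q ≤ H x} := fun x hx => le_of_lt (h1 x hx)
    have hcl : b ∈ closure (Ioo q b) := by
      rw [closure_Ioo (ne_of_lt hqb)]; exact ⟨le_of_lt hqb, le_refl _⟩
    have := closure_mono hsub hcl
    rwa [IsClosed.closure_eq (isClosed_le continuous_const hH)] at this
  refine le_antisymm ?_ hge
  by_contra hc
  push_neg at hc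
  have hopen : IsOpen {x : ℝ | H q < H x} := isOpen_lt continuous_const hH
  obtain ⟨δ, hδ, hball⟩ := Metric.isOpen_iff.1 hopen b hc
  have hall : ∀ x ∈ Ioo q (b + δ/2), H q < H x := by
    intro x hx
    rcases lt_or_ge x b with hxb | hxb
    · exact h1 x ⟨hx.1, hxb⟩
    · exact hball (by rw [Real.ball_eq_Ioo]; exact ⟨by linarith [hδ], by linarith [hx.2]⟩)
  have := upperPt_ge_of (by linarith) hall
  rw [hub] at this
  have : b + δ/2 ≤ b := by exact_mod_cast this
  linarith

lemma exists_real_btwn {q : ℝ} {u : EReal} (h : (q : EReal) < u) :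
    ∃ y : ℝ, q < y ∧ (y : EReal) < u := by
  induction u using EReal.rec with
  | bot => exact absurd h (by simp)
  | coe b =>
    have hqb : q < b := by exact_mod_cast h
    exact ⟨(q + b)/2, by linarith, by exact_mod_cast by linarith⟩
  | top => exact ⟨q + 1, by linarith, by exact_mod_cast EReal.coe_lt_top _⟩

lemma H_ge_on_upper (hH : Continuous H) {q x : ℝ} (hqx : q ≤ x)
    (hx : (x : EReal) ≤ upperPt H q) : H q ≤ H x := by
  rcases eq_or_lt_of_le hqx with rfl | h
  · exact le_refl _
  · rcases lt_or_eq_of_le hx with h2 | h2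
    · exact le_of_lt (H_lt_of_upper h h2)
    · exact (H_upperPt_eq hH h h2.symm).ge

lemma H_le_on_lower (hH : Continuous H) (hHc : Coercive H) {q x : ℝ} (hxq : x ≤ q)
    (hx : lowerPt H q ≤ x) : H x ≤ H q := by
  rcases eq_or_lt_of_le hxq with rfl | h
  · exact le_refl _
  · rcases eq_or_lt_of_le hx with h2 | h2
    · exact (h2 ▸ H_lowerPt_eq hH hHc (h2 ▸ h) : H x = H q).le
    · exact le_of_lt (H_lt_of_lower hHc h2 h)

lemma subR_bddAbove (hFa : Antitone F0) (p : ℝ) :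
    BddAbove ((fun q => min (F0 q) (H q)) '' Ici p) := by
  refine ⟨F0 p, ?_⟩
  rintro y ⟨z, hz, rfl⟩
  exact le_trans (min_le_left _ _) (hFa hz)

lemma le_subR (hFa : Antitone F0) {p x : ℝ} (hx : p ≤ x) :
    min (F0 x) (H x) ≤ subR H F0 p :=
  le_csSup (subR_bddAbove hFa p) ⟨x, hx, rfl⟩

lemma subR_le {p c : ℝ} (h : ∀ x, p ≤ x → min (F0 x) (H x) ≤ c) : subR H F0 p ≤ c := by
  refine csSup_le ⟨_, ⟨p, le_refl p, rfl⟩⟩ ?_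
  rintro y ⟨x, hx, rfl⟩
  exact h x hx

lemma supR_bddBelow (hFa : Antitone F0) (p : ℝ) :
    BddBelow ((fun q => max (F0 q) (H q)) '' Iic p) := by
  refine ⟨F0 p, ?_⟩
  rintro y ⟨z, hz, rfl⟩
  exact le_trans (hFa hz) (le_max_left _ _)

lemma supR_le (hFa : Antitone F0) {p x : ℝ} (hx : x ≤ p) :
    supR H F0 p ≤ max (F0 x) (H x) :=
  csInf_le (supR_bddBelow hFa p) ⟨x, hx, rfl⟩

lemma le_supR {p c : ℝ} (h : ∀ x, x ≤ p → c ≤ max (F0 x) (H x)) : c ≤ supR H F0 p := by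
  refine le_csInf ⟨_, ⟨p, le_refl p, rfl⟩⟩ ?_
  rintro y ⟨x, hx, rfl⟩
  exact h x hx

lemma subR_attain (hH : Continuous H) (hF : Continuous F0) (hFa : Antitone F0)
    (hHc : Coercive H) (p : ℝ) : ∃ x, p ≤ x ∧ subR H F0 p = min (F0 x) (H x) := by
  obtain ⟨X, hX⟩ := coercive_atTop hHc (F0 p)
  set X' := max X p with hX'
  have hg : Continuous fun x => min (F0 x) (H x) := hF.min hH
  obtain ⟨xs, hxsmem, hxs⟩ := isCompact_Icc.exists_isMaxOn (⟨p, le_refl _, le_max_right X p⟩ :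
    (Icc p X').Nonempty) hg.continuousOn
  refine ⟨xs, hxsmem.1, le_antisymm (subR_le ?_) (le_subR hFa hxsmem.1)⟩
  intro x hx
  rcases le_or_gt x X' with h1 | h1
  · exact hxs ⟨hx, h1⟩
  · have h2 : min (F0 x) (H x) ≤ F0 X' := le_trans (min_le_left _ _) (hFa h1.le)
    have h3 : F0 X' ≤ H X' := le_trans (hFa (le_max_right X p)) (hX X' (le_max_left X p))
    have h4 : min (F0 X') (H X') = F0 X' := min_eq_left h3
    have h5 := hxs (⟨le_max_right X p, le_refl X'⟩ : X' ∈ Icc p X')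
    calc min (F0 x) (H x) ≤ F0 X' := h2
    _ = min (F0 X') (H X') := h4.symm
    _ ≤ min (F0 xs) (H xs) := h5

lemma supR_attain (hH : Continuous H) (hF : Continuous F0) (hFa : Antitone F0)
    (hFs : SemiCoercive F0) (p : ℝ) : ∃ x, x ≤ p ∧ supR H F0 p = max (F0 x) (H x) := by
  obtain ⟨X, hX⟩ := semicoercive_atBot hFs (max (F0 p) (H p))
  set X' := min X p with hX'
  have hg : Continuous fun x => max (F0 x) (H x) := hF.max hH
  obtain ⟨xs, hxsmem, hxs⟩ := isCompact_Icc.exists_isMinOn (⟨p, min_le_right X p, le_refl _⟩ :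
    (Icc X' p).Nonempty) hg.continuousOn
  refine ⟨xs, hxsmem.2, le_antisymm (supR_le hFa hxsmem.2) (le_supR ?_)⟩
  intro x hx
  rcases le_or_gt X' x with h1 | h1
  · exact hxs ⟨h1, hx⟩
  · have h2 : max (F0 p) (H p) ≤ F0 x := hX x (le_of_lt (lt_of_lt_of_le h1 (min_le_left X p)))
    have h3 := hxs (⟨min_le_right X p, le_refl p⟩ : p ∈ Icc X' p)
    calc max (F0 xs) (H xs) ≤ max (F0 p) (H p) := h3
    _ ≤ F0 x := h2
    _ ≤ max (F0 x) (H x) := le_max_left _ _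

lemma existsA_left (hH : Continuous H) (hF : Continuous F0) (hFa : Antitone F0)
    {r q : ℝ} (hrq : r ≤ q) (hHr : H r < H q) (hFr : F0 r < H q) (hFq : F0 q ≤ H q) :
    ∃ x, x ∈ Icc r q ∧ F0 x ≤ H x ∧ H x < H q := by
  rcases le_or_gt (F0 r) (H r) with h | h
  · exact ⟨r, ⟨le_refl r, hrq⟩, h, hHr⟩
  · have hc : ContinuousOn (fun y => H y - F0 y) (Icc r q) := (hH.sub hF).continuousOn
    have h0 : (0:ℝ) ∈ Icc (H r - F0 r) (H q - F0 q) := ⟨by linarith, by linarith⟩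
    obtain ⟨u, hu, hfu⟩ := intermediate_value_Icc hrq hc h0
    have heq : H u = F0 u := by dsimp at hfu; linarith
    refine ⟨u, hu, heq.ge, ?_⟩
    calc H u = F0 u := heq
    _ ≤ F0 r := hFa hu.1
    _ < H q := hFr

lemma existsA_right (hH : Continuous H) (hF : Continuous F0) (hFa : Antitone F0)
    {q r : ℝ} (hqr : q ≤ r) (hHr : H q < H r) (hFr : H q < F0 r) (hFq : H q ≤ F0 q) :
    ∃ x, x ∈ Icc q r ∧ H x ≤ F0 x ∧ H q < H x := by
  rcases le_or_gt (H r) (F0 r) with h | h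
  · exact ⟨r, ⟨hqr, le_refl r⟩, h, hHr⟩
  · have hc : ContinuousOn (fun y => H y - F0 y) (Icc q r) := (hH.sub hF).continuousOn
    have h0 : (0:ℝ) ∈ Icc (H q - F0 q) (H r - F0 r) := ⟨by linarith, by linarith⟩
    obtain ⟨u, hu, hfu⟩ := intermediate_value_Icc hqr hc h0
    have heq : H u = F0 u := by dsimp at hfu; linarith
    refine ⟨u, hu, heq.le, ?_⟩
    calc H q < F0 r := hFr
    _ ≤ F0 u := hFa hu.2
    _ = H u := heq.symm

lemma lemmaP (hH : Continuous H) (hF : Continuous F0) (hFa : Antitone F0)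
    {a q : ℝ} (hFq : F0 q ≤ H q)
    (hA : ∃ x, x ∈ Icc a q ∧ F0 x ≤ H x ∧ H x < H q) :
    ∃ q', q' ∈ Ico a q ∧ F0 q' ≤ H q' ∧ H q' < H q ∧ ∀ x ∈ Ioc q' q, H q' < H x := by
  obtain ⟨x0, hx0Icc, hx0F, hx0H⟩ := hA
  set A : Set ℝ := {x | x ∈ Icc a q ∧ F0 x ≤ H x ∧ H x < H q} with hA'
  set D := closure A with hD
  have hDsub : D ⊆ Icc a q ∩ {x | F0 x ≤ H x} ∩ {x | H x ≤ H q} := by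
    apply closure_minimal
    · rintro x ⟨h1, h2, h3⟩; exact ⟨⟨h1, h2⟩, h3.le⟩
    · exact ((isClosed_Icc.inter (isClosed_le hF hH)).inter (isClosed_le hH continuous_const))
  have hDIcc : D ⊆ Icc a q := fun x hx => (hDsub hx).1.1
  have hDcpt : IsCompact D := isCompact_Icc.of_isClosed_subset isClosed_closure hDIcc
  have hx0D : x0 ∈ D := subset_closure ⟨hx0Icc, hx0F, hx0H⟩
  obtain ⟨x1, hx1D, hmin⟩ := hDcpt.exists_isMinOn ⟨x0, hx0D⟩ hH.continuousOn
  set μ := H x1 with hμ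
  have hμlt : μ < H q := lt_of_le_of_lt (hmin hx0D) hx0H
  set E : Set ℝ := D ∩ {x | H x = μ} with hE
  have hEclosed : IsClosed E := isClosed_closure.inter (isClosed_eq hH continuous_const)
  have hEbdd : BddAbove E := ⟨q, fun x hx => (hDIcc hx.1).2⟩
  set q' := sSup E with hq'
  have hq'E : q' ∈ E := hEclosed.csSup_mem ⟨x1, hx1D, rfl⟩ hEbdd
  have hq'D := hq'E.1
  have hq'H : H q' = μ := hq'E.2
  have hq'F : F0 q' ≤ H q' := (hDsub hq'D).1.2
  have hq'Icc : q' ∈ Icc a q := (hDsub hq'D).1.1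
  have hq'q : q' < q := lt_of_le_of_ne hq'Icc.2 (fun h => by rw [h] at hq'H; linarith)
  refine ⟨q', ⟨hq'Icc.1, hq'q⟩, hq'F, by rw [hq'H]; exact hμlt, ?_⟩
  intro x hx
  by_contra hc
  push_neg at hc
  rw [hq'H] at hc
  have hxq : x < q := by
    rcases eq_or_lt_of_le hx.2 with rfl | h
    · exact absurd hc (by push_neg; linarith)
    · exact h
  have hxIcc : x ∈ Icc a q := ⟨le_trans hq'Icc.1 hx.1.le, hx.2⟩
  rcases le_or_gt (F0 x) (H x) with hcase | hcase
  · have hxA : x ∈ A := ⟨hxIcc, hcase, lt_of_le_of_lt hc hμlt⟩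
    have hxD : x ∈ D := subset_closure hxA
    have hh : H x = μ := le_antisymm hc (hmin hxD)
    have : x ≤ q' := le_csSup hEbdd ⟨hxD, hh⟩
    exact absurd hx.1 (not_lt.2 this)
  · have hcIVT : ContinuousOn (fun y => H y - F0 y) (Icc x q) := (hH.sub hF).continuousOn
    have h0 : (0:ℝ) ∈ Icc (H x - F0 x) (H q - F0 q) := ⟨by linarith, by linarith⟩
    obtain ⟨u, hu, hfu⟩ := intermediate_value_Icc hxq.le hcIVT h0
    have heq : H u = F0 u := by dsimp at hfu; linarith
    have hule : H u ≤ μ := by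
      have hq'μ : F0 q' ≤ μ := by rw [← hq'H]; exact hq'F
      calc H u = F0 u := heq
      _ ≤ F0 x := hFa hu.1
      _ ≤ F0 q' := hFa hx.1.le
      _ ≤ μ := hq'μ
    have huA : u ∈ A := ⟨⟨le_trans hxIcc.1 hu.1, hu.2⟩, heq.ge, lt_of_le_of_lt hule hμlt⟩
    have huD : u ∈ D := subset_closure huA
    have hh : H u = μ := le_antisymm hule (hmin huD)
    have h1 : u ≤ q' := le_csSup hEbdd ⟨huD, hh⟩
    have : x ≤ q' := le_trans hu.1 h1
    exact absurd hx.1 (not_lt.2 this)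

lemma lemmaN (hH : Continuous H) (hF : Continuous F0) (hFa : Antitone F0)
    {q b : ℝ} (hFq : H q ≤ F0 q)
    (hA : ∃ x, x ∈ Icc q b ∧ H x ≤ F0 x ∧ H q < H x) :
    ∃ q', q' ∈ Ioc q b ∧ H q' ≤ F0 q' ∧ H q < H q' ∧ ∀ x ∈ Ico q q', H x < H q' := by
  obtain ⟨x0, hx0Icc, hx0F, hx0H⟩ := hA
  set A : Set ℝ := {x | x ∈ Icc q b ∧ H x ≤ F0 x ∧ H q < H x} with hA'
  set D := closure A with hD
  have hDsub : D ⊆ Icc q b ∩ {x | H x ≤ F0 x} ∩ {x | H q ≤ H x} := by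
    apply closure_minimal
    · rintro x ⟨h1, h2, h3⟩; exact ⟨⟨h1, h2⟩, h3.le⟩
    · exact ((isClosed_Icc.inter (isClosed_le hH hF)).inter (isClosed_le continuous_const hH))
  have hDIcc : D ⊆ Icc q b := fun x hx => (hDsub hx).1.1
  have hDcpt : IsCompact D := isCompact_Icc.of_isClosed_subset isClosed_closure hDIcc
  have hx0D : x0 ∈ D := subset_closure ⟨hx0Icc, hx0F, hx0H⟩
  obtain ⟨x1, hx1D, hmax⟩ := hDcpt.exists_isMaxOn ⟨x0, hx0D⟩ hH.continuousOn
  set μ := H x1 with hμ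
  have hμlt : H q < μ := lt_of_lt_of_le hx0H (hmax hx0D)
  set E : Set ℝ := D ∩ {x | H x = μ} with hE
  have hEclosed : IsClosed E := isClosed_closure.inter (isClosed_eq hH continuous_const)
  have hEbdd : BddBelow E := ⟨q, fun x hx => (hDIcc hx.1).1⟩
  set q' := sInf E with hq'
  have hq'E : q' ∈ E := hEclosed.csInf_mem ⟨x1, hx1D, rfl⟩ hEbdd
  have hq'D := hq'E.1
  have hq'H : H q' = μ := hq'E.2
  have hq'F : H q' ≤ F0 q' := (hDsub hq'D).1.2
  have hq'Icc : q' ∈ Icc q b := (hDsub hq'D).1.1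
  have hq'q : q < q' := lt_of_le_of_ne hq'Icc.1 (fun h => by rw [← h] at hq'H; linarith)
  refine ⟨q', ⟨hq'q, hq'Icc.2⟩, hq'F, by rw [hq'H]; exact hμlt, ?_⟩
  intro x hx
  by_contra hc
  push_neg at hc
  rw [hq'H] at hc
  have hqx : q < x := by
    rcases eq_or_lt_of_le hx.1 with rfl | h
    · exact absurd hc (by push_neg; linarith)
    · exact h
  have hxIcc : x ∈ Icc q b := ⟨hx.1, le_trans hx.2.le hq'Icc.2⟩
  rcases le_or_gt (H x) (F0 x) with hcase | hcase
  · have hxA : x ∈ A := ⟨hxIcc, hcase, lt_of_lt_of_le hμlt hc⟩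
    have hxD : x ∈ D := subset_closure hxA
    have hh : H x = μ := le_antisymm (hmax hxD) hc
    have : q' ≤ x := csInf_le hEbdd ⟨hxD, hh⟩
    exact absurd hx.2 (not_lt.2 this)
  · have hcIVT : ContinuousOn (fun y => H y - F0 y) (Icc q x) := (hH.sub hF).continuousOn
    have h0 : (0:ℝ) ∈ Icc (H q - F0 q) (H x - F0 x) := ⟨by linarith, by linarith⟩
    obtain ⟨u, hu, hfu⟩ := intermediate_value_Icc hqx.le hcIVT h0
    have heq : H u = F0 u := by dsimp at hfu; linarith
    have hule : μ ≤ H u := by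
      have hq'μ : μ ≤ F0 q' := by rw [← hq'H]; exact hq'F
      calc μ ≤ F0 q' := hq'μ
      _ ≤ F0 x := hFa hx.2.le
      _ ≤ F0 u := hFa hu.2
      _ = H u := heq.symm
    have huA : u ∈ A := ⟨⟨hu.1, le_trans hu.2 hxIcc.2⟩, heq.le, lt_of_lt_of_le hμlt hule⟩
    have huD : u ∈ D := subset_closure huA
    have hh : H u = μ := le_antisymm (hmax huD) hule
    have h1 : q' ≤ u := csInf_le hEbdd ⟨huD, hh⟩
    have : q' ≤ x := le_trans h1 hu.2
    exact absurd hx.2 (not_lt.2 this)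

end RG
namespace RG

variable {H F0 : ℝ → ℝ}

lemma posLimiter_contra (hH : Continuous H) (hHc : Coercive H)
    {q q' : ℝ} (hq : posLimiter H F0 q) (h1 : F0 q' ≤ H q') (h2 : H q' < H q)
    (hq'q : q' < q) (h3 : ∀ x ∈ Ioc q' q, H q' < H x) : False := by
  obtain ⟨y, hy1, hy2⟩ := exists_real_btwn hq.1
  have hup : (y : EReal) ≤ upperPt H q' := by
    refine upperPt_ge_of (lt_trans hq'q hy1) ?_
    intro x hx
    rcases le_or_gt x q with hle | hlt
    · exact h3 x ⟨hx.1, hle⟩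
    · have hxE : (x : EReal) < upperPt H q := by
        refine lt_of_lt_of_le ?_ hy2.le
        exact_mod_cast hx.2
      exact lt_trans h2 (H_lt_of_upper hlt hxE)
  set y' := (q + y)/2 with hy'
  have hqy' : q < y' := by simp only [hy']; linarith
  have hy'y : y' < y := by simp only [hy']; linarith
  have hempty := hq.2.2 q' h2 h1
  have hmem : y' ∈ ({r : ℝ | lowerPt H q' < r ∧ (r : EReal) < upperPt H q'} ∩
      {r : ℝ | q < r ∧ (r : EReal) < upperPt H q}) := by
    refine ⟨⟨?_, ?_⟩, hqy', ?_⟩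
    · exact lt_of_le_of_lt (lowerPt_le hHc q') (lt_trans hq'q hqy')
    · exact lt_of_lt_of_le (by exact_mod_cast hy'y) hup
    · exact lt_trans (by exact_mod_cast hy'y) hy2
  rw [hempty] at hmem
  exact hmem

lemma negLimiter_contra (hH : Continuous H) (hHc : Coercive H)
    {q q' : ℝ} (hq : negLimiter H F0 q) (h1 : H q' ≤ F0 q') (h2 : H q < H q')
    (hqq' : q < q') (h3 : ∀ x ∈ Ico q q', H x < H q') : False := by
  have hlow : lowerPt H q < q := hq.1
  have hlpq' : lowerPt H q' ≤ lowerPt H q := by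
    refine lowerPt_le_of hHc (lt_trans hlow hqq') ?_
    intro x hx
    rcases lt_or_ge x q with hlt | hle
    · exact lt_trans (H_lt_of_lower hHc hx.1 hlt) h2
    · exact h3 x ⟨hle, hx.2⟩
  set y := (lowerPt H q + q)/2 with hy
  have hy1 : lowerPt H q < y := by simp only [hy]; linarith
  have hy2 : y < q := by simp only [hy]; linarith
  have hempty := hq.2.2 q' h1 h2
  have hmem : y ∈ ({r : ℝ | lowerPt H q' < r ∧ (r : EReal) < upperPt H q'} ∩
      Ioo (lowerPt H q) q) := by
    refine ⟨⟨lt_of_le_of_lt hlpq' hy1, ?_⟩, hy1, hy2⟩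
    refine lt_of_lt_of_le ?_ (le_upperPt q')
    exact_mod_cast lt_trans hy2 hqq'
  rw [hempty] at hmem
  exact hmem

lemma PL_F0_eq (hH : Continuous H) (hHc : Coercive H) (hF : Continuous F0)
    (hFa : Antitone F0) {q : ℝ} (hq : posLimiter H F0 q) (hlow : lowerPt H q < q) :
    F0 q = H q := by
  by_contra hne
  have hlt : F0 q < H q := lt_of_le_of_ne hq.2.1 hne
  have hopen : IsOpen {x : ℝ | F0 x < H x} := isOpen_lt hF hH
  obtain ⟨δ, hδ, hball⟩ := Metric.isOpen_iff.1 hopen q hlt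
  set a := max ((lowerPt H q + q)/2) (q - δ/2) with ha
  have ha1 : lowerPt H q < a :=
    lt_of_lt_of_le (by linarith : lowerPt H q < (lowerPt H q + q)/2) (le_max_left _ _)
  have ha2 : a < q := by
    apply max_lt
    · linarith
    · linarith
  have ha3 : F0 a < H a := by
    apply hball
    rw [Real.ball_eq_Ioo]
    constructor
    · have := le_max_right ((lowerPt H q + q)/2) (q - δ/2)
      rw [← ha] at this; linarith
    · linarith
  have hHa : H a < H q := H_lt_of_lower hHc ha1 ha2
  obtain ⟨q', hq'Ico, h1', h2', h3'⟩ :=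
    lemmaP hH hF hFa hq.2.1 ⟨a, ⟨le_refl a, ha2.le⟩, ha3.le, hHa⟩
  exact posLimiter_contra hH hHc hq h1' h2' hq'Ico.2 h3'

lemma NL_F0_eq (hH : Continuous H) (hHc : Coercive H) (hF : Continuous F0)
    (hFa : Antitone F0) {q : ℝ} (hq : negLimiter H F0 q)
    (hup : (q : EReal) < upperPt H q) : F0 q = H q := by
  by_contra hne
  have hlt : H q < F0 q := lt_of_le_of_ne hq.2.1 (fun e => hne e.symm)
  obtain ⟨y, hy1, hy2⟩ := exists_real_btwn hup
  have hopen : IsOpen {x : ℝ | H x < F0 x} := isOpen_lt hH hF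
  obtain ⟨δ, hδ, hball⟩ := Metric.isOpen_iff.1 hopen q hlt
  set b := min ((q + y)/2) (q + δ/2) with hb
  have hb1 : q < b := by
    apply lt_min
    · linarith
    · linarith
  have hb2 : b < y := lt_of_le_of_lt (min_le_left _ _) (by linarith)
  have hb3 : H b < F0 b := by
    apply hball
    rw [Real.ball_eq_Ioo]
    constructor
    · linarith
    · have := min_le_right ((q + y)/2) (q + δ/2)
      rw [← hb] at this; linarith
  have hHb : H q < H b := by
    refine H_lt_of_upper hb1 (lt_of_lt_of_le ?_ hy2.le)
    exact_mod_cast hb2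
  obtain ⟨q', hq'Ioc, h1', h2', h3'⟩ :=
    lemmaN hH hF hFa hq.2.1 ⟨b, ⟨hb1.le, le_refl b⟩, hb3.le, hHb⟩
  exact negLimiter_contra hH hHc hq h1' h2' hq'Ioc.1 h3'

lemma part1_pos (hH : Continuous H) (hHc : Coercive H) (hF : Continuous F0)
    (hFa : Antitone F0) {q : ℝ} (hq : posLimiter H F0 q) :
    ∀ p : ℝ, lowerPt H q ≤ p → (p : EReal) ≤ upperPt H q → relax H F0 p = H q := by
  intro p hp1 hp2
  rcases lt_or_ge p q with hpq | hqp
  · have hlow : lowerPt H q < q := lt_of_le_of_lt hp1 hpq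
    have hF0q : F0 q = H q := PL_F0_eq hH hHc hF hFa hq hlow
    have hHp : H p ≤ H q := H_le_on_lower hH hHc hpq.le hp1
    have hF0p : H q ≤ F0 p := hF0q ▸ hFa hpq.le
    unfold relax
    rw [if_pos (le_trans hHp hF0p)]
    refine le_antisymm (subR_le ?_) ?_
    · intro x hx
      rcases le_or_gt q x with h | h
      · exact le_trans (min_le_left _ _) (hF0q ▸ hFa h)
      · exact le_trans (min_le_right _ _) (H_le_on_lower hH hHc h.le (le_trans hp1 hx))
    · have h := le_subR (H := H) hFa (le_of_lt hpq)
      rw [hF0q, min_self] at h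
      exact h
  · have hHp : H q ≤ H p := H_ge_on_upper hH hqp hp2
    have hF0p : F0 p ≤ H q := le_trans (hFa hqp) hq.2.1
    unfold relax
    split_ifs with h
    · refine le_antisymm
        (subR_le fun x hx => le_trans (min_le_left _ _) (le_trans (hFa hx) hF0p)) ?_
      exact le_trans (le_min (le_trans hHp h) hHp) (le_subR hFa (le_refl p))
    · refine le_antisymm ?_ (le_supR ?_)
      · have h2 := supR_le (H := H) hFa hqp
        rwa [max_eq_right hq.2.1] at h2
      · intro x hx
        by_contra hc
        push_neg at hc
        have hF0x : F0 x < H q := lt_of_le_of_lt (le_max_left _ _) hc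
        have hHx : H x < H q := lt_of_le_of_lt (le_max_right _ _) hc
        have hxq : x < q := by
          by_contra hge
          push_neg at hge
          have h3 : (x : EReal) ≤ upperPt H q :=
            le_trans (by exact_mod_cast hx) hp2
          have := H_ge_on_upper hH hge h3
          linarith
        obtain ⟨q', hq'Ico, h1', h2', h3'⟩ :=
          lemmaP hH hF hFa hq.2.1 (existsA_left hH hF hFa hxq.le hHx hF0x hq.2.1)
        exact posLimiter_contra hH hHc hq h1' h2' hq'Ico.2 h3'

lemma part1_neg (hH : Continuous H) (hHc : Coercive H) (hF : Continuous F0)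
    (hFa : Antitone F0) {q : ℝ} (hq : negLimiter H F0 q) :
    ∀ p : ℝ, lowerPt H q ≤ p → (p : EReal) ≤ upperPt H q → relax H F0 p = H q := by
  intro p hp1 hp2
  rcases le_or_gt p q with hpq | hqp
  · have hHp : H p ≤ H q := H_le_on_lower hH hHc hpq hp1
    have hF0p : H q ≤ F0 p := le_trans hq.2.1 (hFa hpq)
    unfold relax
    rw [if_pos (le_trans hHp hF0p)]
    refine le_antisymm (subR_le ?_) ?_
    · intro x hx
      by_contra hc
      push_neg at hc
      have hF0x : H q < F0 x := lt_of_lt_of_le hc (min_le_left _ _)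
      have hHx : H q < H x := lt_of_lt_of_le hc (min_le_right _ _)
      have hqx : q ≤ x := by
        by_contra hgt
        push_neg at hgt
        have := H_le_on_lower hH hHc hgt.le (le_trans hp1 hx)
        linarith
      obtain ⟨q', hq'Ioc, h1', h2', h3'⟩ :=
        lemmaN hH hF hFa hq.2.1 (existsA_right hH hF hFa hqx hHx hF0x hq.2.1)
      exact negLimiter_contra hH hHc hq h1' h2' hq'Ioc.1 h3'
    · have h := le_subR (H := H) hFa hpq
      rwa [min_eq_right hq.2.1] at h
  · have hup : (q : EReal) < upperPt H q :=
      lt_of_lt_of_le (by exact_mod_cast hqp) hp2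
    have hF0q : F0 q = H q := NL_F0_eq hH hHc hF hFa hq hup
    have hHp : H q ≤ H p := H_ge_on_upper hH hqp.le hp2
    have hF0p : F0 p ≤ H q := hF0q ▸ hFa hqp.le
    unfold relax
    split_ifs with h
    · refine le_antisymm
        (subR_le fun x hx => le_trans (min_le_left _ _) (le_trans (hFa hx) hF0p)) ?_
      exact le_trans (le_min (le_trans hHp h) hHp) (le_subR hFa (le_refl p))
    · refine le_antisymm ?_ (le_supR ?_)
      · have h2 := supR_le (H := H) hFa hqp.le
        rwa [hF0q, max_self] at h2
      · intro x hx
        by_contra hc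
        push_neg at hc
        have hF0x : F0 x < H q := lt_of_le_of_lt (le_max_left _ _) hc
        have hHx : H x < H q := lt_of_le_of_lt (le_max_right _ _) hc
        have hqx : q < x := by
          by_contra hge
          push_neg at hge
          have := hFa hge
          rw [hF0q] at this
          linarith
        have h3 : (x : EReal) ≤ upperPt H q := le_trans (by exact_mod_cast hx) hp2
        have := H_ge_on_upper hH hqx.le h3
        linarith

end RG
namespace RG

variable {H F0 : ℝ → ℝ}

lemma part2_sub (hH : Continuous H) (hHc : Coercive H) (hF : Continuous F0)
    (hFa : Antitone F0) {p : ℝ} (hlt : H p < subR H F0 p) :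
    ∃ q : ℝ, negLimiter H F0 q ∧ lowerPt H q ≤ p ∧ (p : EReal) ≤ upperPt H q := by
  set c₀ := subR H F0 p with hc₀
  obtain ⟨xs, hxs, hxeq⟩ := subR_attain hH hF hFa hHc p
  set M : Set ℝ := Ici p ∩ (fun x => min (F0 x) (H x)) ⁻¹' {c₀} with hM
  have hMclosed : IsClosed M := isClosed_Ici.inter (isClosed_singleton.preimage (hF.min hH))
  have hMne : M.Nonempty := ⟨xs, hxs, hxeq.symm⟩
  have hMbdd : BddBelow M := ⟨p, fun x hx => hx.1⟩
  set q := sInf M with hqdef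
  have hqM : q ∈ M := hMclosed.csInf_mem hMne hMbdd
  have hpq' : p ≤ q := hqM.1
  have hgq : min (F0 q) (H q) = c₀ := hqM.2
  have hF0q : c₀ ≤ F0 q := by
    have := min_le_left (F0 q) (H q); rw [hgq] at this; exact this
  have hHq_ge : c₀ ≤ H q := by
    have := min_le_right (F0 q) (H q); rw [hgq] at this; exact this
  have hlow' : ∀ x, p ≤ x → x < q → H x < c₀ := by
    intro x hx1 hx2
    have hne : min (F0 x) (H x) ≠ c₀ := by
      intro h
      exact absurd (csInf_le hMbdd ⟨hx1, h⟩) (not_le.2 hx2)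
    have hle : min (F0 x) (H x) ≤ c₀ := le_subR hFa hx1
    by_contra hcon
    push_neg at hcon
    have h1 : F0 q ≤ F0 x := hFa hx2.le
    have h2 : c₀ ≤ min (F0 x) (H x) := le_min (le_trans hF0q h1) hcon
    exact hne (le_antisymm hle h2)
  have hpq : p < q := by
    refine lt_of_le_of_ne hpq' (fun heq => ?_)
    rw [← heq] at hHq_ge
    linarith
  have hHq : H q = c₀ := by
    refine le_antisymm ?_ hHq_ge
    have hsub : Ioo p q ⊆ {x : ℝ | H x ≤ c₀} := fun x hx => (hlow' x hx.1.le hx.2).le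
    have hcl : q ∈ closure (Ioo p q) := by
      rw [closure_Ioo (ne_of_lt hpq)]; exact ⟨hpq.le, le_refl _⟩
    have := closure_mono hsub hcl
    rwa [IsClosed.closure_eq (isClosed_le hH continuous_const)] at this
  have hlp : lowerPt H q ≤ p :=
    lowerPt_le_of hHc hpq (fun x hx => by rw [hHq]; exact hlow' x hx.1.le hx.2)
  refine ⟨q, ⟨lt_of_le_of_lt hlp hpq, by rw [hHq]; exact hF0q, ?_⟩, hlp, ?_⟩
  swap
  · exact le_trans (by exact_mod_cast hpq.le) (le_upperPt q)
  intro q' h1 h2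
  rw [hHq] at h2
  rw [Set.eq_empty_iff_forall_notMem]
  rintro y ⟨⟨hy1, hy2⟩, hy3, hy4⟩
  have hyH : H y < c₀ := by
    have := H_lt_of_lower hHc hy3 hy4; rwa [hHq] at this
  rcases le_or_gt p q' with hq'p | hq'p
  · have hmin : min (F0 q') (H q') = H q' := min_eq_right h1
    have hle := le_subR (H := H) hFa hq'p
    rw [hmin] at hle
    exact absurd hle (not_le.2 (by rw [← hc₀] at *; exact h2))
  · rcases lt_or_ge (p : EReal) (upperPt H q') with hcase | hcase
    · have := H_lt_of_upper hq'p hcase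
      linarith
    · have hyp : y < p := by
        have : (y : EReal) < (p : EReal) := lt_of_lt_of_le hy2 hcase
        exact_mod_cast this
      rcases lt_trichotomy y q' with hyq' | hyq' | hyq'
      · have : H q' < H q := H_lt_of_lower hHc (lt_trans hy3 hyq') (lt_trans hq'p hpq)
        rw [hHq] at this
        linarith
      · subst hyq'
        linarith
      · have := H_lt_of_upper hyq' hy2
        linarith

lemma part2_sup (hH : Continuous H) (hHc : Coercive H) (hF : Continuous F0)
    (hFa : Antitone F0) (hFs : SemiCoercive F0) {p : ℝ} (hlt : supR H F0 p < H p) :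
    ∃ q : ℝ, posLimiter H F0 q ∧ lowerPt H q ≤ p ∧ (p : EReal) ≤ upperPt H q := by
  set c₀ := supR H F0 p with hc₀
  obtain ⟨xs, hxs, hxeq⟩ := supR_attain hH hF hFa hFs p
  set M : Set ℝ := Iic p ∩ (fun x => max (F0 x) (H x)) ⁻¹' {c₀} with hM
  have hMclosed : IsClosed M := isClosed_Iic.inter (isClosed_singleton.preimage (hF.max hH))
  have hMne : M.Nonempty := ⟨xs, hxs, hxeq.symm⟩
  have hMbdd : BddAbove M := ⟨p, fun x hx => hx.1⟩
  set q := sSup M with hqdef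
  have hqM : q ∈ M := hMclosed.csSup_mem hMne hMbdd
  have hpq' : q ≤ p := hqM.1
  have hgq : max (F0 q) (H q) = c₀ := hqM.2
  have hF0q : F0 q ≤ c₀ := by
    have := le_max_left (F0 q) (H q); rw [hgq] at this; exact this
  have hHq_le : H q ≤ c₀ := by
    have := le_max_right (F0 q) (H q); rw [hgq] at this; exact this
  have hhigh : ∀ x, q < x → x ≤ p → c₀ < H x := by
    intro x hx1 hx2
    have hne : max (F0 x) (H x) ≠ c₀ := by
      intro h
      exact absurd (le_csSup hMbdd ⟨hx2, h⟩) (not_le.2 hx1)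
    have hge : c₀ ≤ max (F0 x) (H x) := supR_le hFa hx2
    by_contra hcon
    push_neg at hcon
    have h1 : F0 x ≤ F0 q := hFa hx1.le
    have h2 : max (F0 x) (H x) ≤ c₀ := max_le (le_trans h1 hF0q) hcon
    exact hne (le_antisymm h2 hge)
  have hpq : q < p := by
    refine lt_of_le_of_ne hpq' (fun heq => ?_)
    rw [heq] at hHq_le
    linarith
  have hHq : H q = c₀ := by
    refine le_antisymm hHq_le ?_
    have hsub : Ioo q p ⊆ {x : ℝ | c₀ ≤ H x} := fun x hx => (hhigh x hx.1 hx.2.le).le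
    have hcl : q ∈ closure (Ioo q p) := by
      rw [closure_Ioo (ne_of_lt hpq)]; exact ⟨le_refl _, hpq.le⟩
    have := closure_mono hsub hcl
    rwa [IsClosed.closure_eq (isClosed_le continuous_const hH)] at this
  have hup : (p : EReal) ≤ upperPt H q :=
    upperPt_ge_of hpq (fun x hx => by rw [hHq]; exact hhigh x hx.1 hx.2.le)
  refine ⟨q, ⟨lt_of_lt_of_le (by exact_mod_cast hpq) hup, by rw [hHq]; exact hF0q, ?_⟩,
    le_trans (lowerPt_le hHc q) hpq.le, hup⟩
  intro q' h2 h1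
  rw [hHq] at h2
  rw [Set.eq_empty_iff_forall_notMem]
  rintro y ⟨⟨hy1, hy2⟩, hy3, hy4⟩
  have hyH : c₀ < H y := by
    have := H_lt_of_upper hy3 hy4; rwa [hHq] at this
  rcases le_or_gt q' p with hq'p | hq'p
  · have hmax : max (F0 q') (H q') = H q' := max_eq_right h1
    have hge := supR_le (H := H) hFa hq'p
    rw [hmax] at hge
    exact absurd hge (not_le.2 h2)
  · rcases lt_or_ge (lowerPt H q') p with hcase | hcase
    · have := H_lt_of_lower hHc hcase hq'p
      linarith
    · have hpy : p < y := lt_of_le_of_lt hcase hy1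
      rcases lt_trichotomy y q' with hyq' | hyq' | hyq'
      · have := H_lt_of_lower hHc hy1 hyq'
        linarith
      · subst hyq'
        linarith
      · have hq'up : (q' : EReal) < upperPt H q := by
          refine lt_of_lt_of_le ?_ (le_of_lt hy4)
          exact_mod_cast hyq'
        have := H_lt_of_upper (lt_trans hpq hq'p : q < q') hq'up
        rw [hHq] at this
        linarith

end RG

/-- The relaxation `ℜF0` coincides with Guerand's relaxed boundary function. -/
theorem relax_eq_guerand (H F0 : ℝ → ℝ)
    (hH : Continuous H) (hHc : Coercive H)
    (hF : Continuous F0) (hFa : Antitone F0) (hFs : SemiCoercive F0) :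
    (∀ q : ℝ, (posLimiter H F0 q ∨ negLimiter H F0 q) →
      ∀ p : ℝ, lowerPt H q ≤ p → (p : EReal) ≤ upperPt H q → relax H F0 p = H q) ∧
    (∀ p : ℝ,
      (¬ ∃ q : ℝ, (posLimiter H F0 q ∨ negLimiter H F0 q) ∧
        lowerPt H q ≤ p ∧ (p : EReal) ≤ upperPt H q) →
      relax H F0 p = H p) := by
  constructor
  · intro q hq p hp1 hp2
    rcases hq with hq | hq
    · exact RG.part1_pos hH hHc hF hFa hq p hp1 hp2
    · exact RG.part1_neg hH hHc hF hFa hq p hp1 hp2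
  · intro p hno
    unfold relax
    split_ifs with h
    · refine le_antisymm ?_ ?_
      · by_contra hc
        push_neg at hc
        obtain ⟨q, hq, h1, h2⟩ := RG.part2_sub hH hHc hF hFa hc
        exact hno ⟨q, Or.inr hq, h1, h2⟩
      · have := RG.le_subR (H := H) hFa (le_refl p)
        rwa [min_eq_right h] at this
    · push_neg at h
      refine le_antisymm ?_ ?_
      · have := RG.supR_le (H := H) hFa (le_refl p)
        rwa [max_eq_right h.le] at this
      · by_contra hc
        push_neg at hc
        obtain ⟨q, hq, h1, h2⟩ := RG.part2_sup hH hHc hF hFa hFs hc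
        exact hno ⟨q, Or.inl hq, h1, h2⟩
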